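/- Let L > 0, let r ≥ 1 be an integer, and let f₊, f₋ : ℝ → ℝ be twice continuously differentiable with f₊ 0 = L/2, f₋ 0 = −L/2, deriv f₊ 0 = 0 = deriv f₋ 0, and (deriv (deriv f₋)) 0 = −(deriv (deriv f₊)) 0. For p : ZMod (2r) let f_p := f₊ if p.val is even and f_p := f₋ if p.val is odd (this is well defined since 2r is even), and define the length functional 𝓛 : (ZMod (2r) → ℝ) → ℝ by 𝓛 x = ∑_{p : ZMod (2r)} Real.sqrt ((x (p+1) − x p)² + (f_{p+1} (x (p+1)) − f_p (x p))²). Set a := −2(1 + L·(deriv (deriv f₊)) 0). Then 0 is a critical point of 𝓛 (the Fréchet derivative of 𝓛 at 0 vanishes), and for all p, q : ZMod (2r) the second partial derivative ∂²𝓛/∂x_p∂x_q at 0 (i.e., iteratedFDeriv ℝ 2 𝓛 0 applied to the coordinate basis vectors e_p, e_q) equals the (p,q) entry of the matrix (−1/L) • A(a). -/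

import Mathlib

open Matrix

/-- The cyclic shift permutation matrix `S p q = 1` if `q = p + 1`, else `0`. -/
noncomputable def shiftMat (n : ℕ) : Matrix (ZMod n) (ZMod n) ℝ :=
  fun p q => if q = p + 1 then 1 else 0

/-- The symmetric circulant matrix `A(a) = a•1 + S + Sᵀ`. -/
noncomputable def Amat (n : ℕ) (a : ℝ) : Matrix (ZMod n) (ZMod n) ℝ :=
  a • 1 + shiftMat n + (shiftMat n)ᵀ

section helpers
variable {n : ℕ} [NeZero n]

noncomputable def pj (p : ZMod n) : (ZMod n → ℝ) →L[ℝ] ℝ := ContinuousLinearMap.proj p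

noncomputable def ellc (p : ZMod n) : (ZMod n → ℝ) →L[ℝ] ℝ := pj (p+1) - pj p

noncomputable def mC (F : ZMod n → ℝ → ℝ) (p : ZMod n) (x : ZMod n → ℝ) :
    (ZMod n → ℝ) →L[ℝ] ℝ :=
  deriv (F (p+1)) (x (p+1)) • pj (p+1) - deriv (F p) (x p) • pj p

noncomputable def Dmap (F : ZMod n → ℝ → ℝ) (x : ZMod n → ℝ) : (ZMod n → ℝ) →L[ℝ] ℝ :=
  ∑ p, (Real.sqrt ((x (p+1) - x p)^2 + (F (p+1) (x (p+1)) - F p (x p))^2))⁻¹ •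
    ((x (p+1) - x p) • ellc p + (F (p+1) (x (p+1)) - F p (x p)) • mC F p x)

lemma hasFDerivAt_term (F : ZMod n → ℝ → ℝ) (hC2 : ∀ p, Differentiable ℝ (F p))
    (x : ZMod n → ℝ) (p : ZMod n)
    (hQ : 0 < (x (p+1) - x p)^2 + (F (p+1) (x (p+1)) - F p (x p))^2) :
    HasFDerivAt
      (fun y : ZMod n → ℝ =>
        Real.sqrt ((y (p+1) - y p)^2 + (F (p+1) (y (p+1)) - F p (y p))^2))
      ((Real.sqrt ((x (p+1) - x p)^2 + (F (p+1) (x (p+1)) - F p (x p))^2))⁻¹ •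
        ((x (p+1) - x p) • ellc p + (F (p+1) (x (p+1)) - F p (x p)) • mC F p x)) x := by
  have hA : HasFDerivAt (fun y : ZMod n → ℝ => y (p+1) - y p) (ellc p) x :=
    ((pj (n := n) (p+1)).hasFDerivAt (x := x)).sub ((pj p).hasFDerivAt)
  have hB : HasFDerivAt (fun y : ZMod n → ℝ => F (p+1) (y (p+1)) - F p (y p)) (mC F p x) x := by
    have h1 : HasFDerivAt (fun y : ZMod n → ℝ => F (p+1) (y (p+1)))
        (deriv (F (p+1)) (x (p+1)) • pj (p+1)) x :=
      ((hC2 (p+1)) (x (p+1))).hasDerivAt.comp_hasFDerivAt x ((pj (n := n) (p+1)).hasFDerivAt)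
    have h2 : HasFDerivAt (fun y : ZMod n → ℝ => F p (y p))
        (deriv (F p) (x p) • pj p) x :=
      ((hC2 p) (x p)).hasDerivAt.comp_hasFDerivAt x ((pj (n := n) p).hasFDerivAt)
    exact h1.sub h2
  have hQd : HasFDerivAt
      (fun y : ZMod n → ℝ => (y (p+1) - y p)^2 + (F (p+1) (y (p+1)) - F p (y p))^2)
      ((x (p+1) - x p) • ellc p + (x (p+1) - x p) • ellc p +
        ((F (p+1) (x (p+1)) - F p (x p)) • mC F p x +
         (F (p+1) (x (p+1)) - F p (x p)) • mC F p x)) x := by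
    have : (fun y : ZMod n → ℝ =>
        (y (p+1) - y p)^2 + (F (p+1) (y (p+1)) - F p (y p))^2) =
        fun y => (y (p+1) - y p) * (y (p+1) - y p) +
          (F (p+1) (y (p+1)) - F p (y p)) * (F (p+1) (y (p+1)) - F p (y p)) := by
      funext y; ring
    rw [this]
    exact (hA.mul hA).add (hB.mul hB)
  have hs := hQd.sqrt hQ.ne'
  refine hs.congr_fderiv ?_
  have hsd : Real.sqrt ((x (p+1) - x p)^2 + (F (p+1) (x (p+1)) - F p (x p))^2) ≠ 0 :=
    (Real.sqrt_pos.mpr hQ).ne'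
  ext v
  simp only [ContinuousLinearMap.smul_apply, ContinuousLinearMap.add_apply, smul_eq_mul]
  field_simp
  ring


lemma hasFDerivAt_Lsum (F : ZMod n → ℝ → ℝ) (hC2 : ∀ p, Differentiable ℝ (F p))
    (x : ZMod n → ℝ)
    (hQ : ∀ p, 0 < (x (p+1) - x p)^2 + (F (p+1) (x (p+1)) - F p (x p))^2) :
    HasFDerivAt
      (fun y : ZMod n → ℝ => ∑ p,
        Real.sqrt ((y (p+1) - y p)^2 + (F (p+1) (y (p+1)) - F p (y p))^2))
      (Dmap F x) x :=
  HasFDerivAt.fun_sum fun p _ => hasFDerivAt_term F hC2 x p (hQ p)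


lemma hasFDerivAt_Dmap (F : ZMod n → ℝ → ℝ) (L k : ℝ) (hL : 0 < L) (e : ZMod n → ℝ)
    (he2 : ∀ p, e p * e p = 1) (hstep : ∀ p, e (p+1) = - e p)
    (hC2 : ∀ p, ContDiff ℝ 2 (F p))
    (hFv : ∀ p, F p 0 = e p * (L/2))
    (hF1 : ∀ p, deriv (F p) 0 = 0)
    (hF2 : ∀ p, deriv (deriv (F p)) 0 = e p * k) :
    HasFDerivAt (Dmap F)
      (∑ p, ((1/L) • (ellc p).smulRight (ellc p)
        + k • ((pj (p+1)).smulRight (pj (n := n) (p+1)))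
        + k • ((pj p).smulRight (pj p)))) 0 := by
  have hdiff : ∀ q : ZMod n, Differentiable ℝ (F q) := fun q =>
    (hC2 q).differentiable (by norm_num)
  have hder : ∀ q : ZMod n, Differentiable ℝ (deriv (F q)) := by
    intro q
    have h2 := hC2 q
    rw [show (2 : WithTop ℕ∞) = 1 + 1 by norm_num] at h2
    exact (contDiff_succ_iff_deriv.mp h2).2.2.differentiable one_ne_zero
  apply HasFDerivAt.fun_sum
  intro p _
  -- values at zero
  have hA0 : (0:ZMod n → ℝ) (p+1) - (0:ZMod n → ℝ) p = 0 := by simp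
  have hB0 : F (p+1) ((0:ZMod n → ℝ) (p+1)) - F p ((0:ZMod n → ℝ) p) = -(e p) * L := by
    simp only [Pi.zero_apply, hFv, hstep]; ring
  have hQ0 : ((0:ZMod n → ℝ) (p+1) - (0:ZMod n → ℝ) p)^2
      + (F (p+1) ((0:ZMod n → ℝ) (p+1)) - F p ((0:ZMod n → ℝ) p))^2 = L^2 := by
    rw [hA0, hB0]
    have := he2 p; nlinarith [he2 p]
  have hsq0 : Real.sqrt (((0:ZMod n → ℝ) (p+1) - (0:ZMod n → ℝ) p)^2
      + (F (p+1) ((0:ZMod n → ℝ) (p+1)) - F p ((0:ZMod n → ℝ) p))^2) = L := by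
    rw [hQ0, Real.sqrt_sq hL.le]
  have hQpos : 0 < ((0:ZMod n → ℝ) (p+1) - (0:ZMod n → ℝ) p)^2
      + (F (p+1) ((0:ZMod n → ℝ) (p+1)) - F p ((0:ZMod n → ℝ) p))^2 := by
    rw [hQ0]; positivity
  -- derivative of sqrt Q at 0
  have hsqrt := hasFDerivAt_term F hdiff 0 p hQpos
  -- derivative of s = (sqrt Q)⁻¹ at 0
  have hLne : Real.sqrt (((0:ZMod n → ℝ) (p+1) - (0:ZMod n → ℝ) p)^2
      + (F (p+1) ((0:ZMod n → ℝ) (p+1)) - F p ((0:ZMod n → ℝ) p))^2) ≠ 0 := by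
    rw [hsq0]; exact hL.ne'
  have hs := (hasDerivAt_inv hLne).comp_hasFDerivAt (0 : ZMod n → ℝ) hsqrt
  -- derivative of A x • ellc p
  have hA : HasFDerivAt (fun y : ZMod n → ℝ => y (p+1) - y p) (ellc p) 0 :=
    ((pj (n := n) (p+1)).hasFDerivAt (x := 0)).sub ((pj p).hasFDerivAt)
  have hAl := hA.smul (hasFDerivAt_const (ellc p) (0 : ZMod n → ℝ))
  -- derivative of mC F p x
  have hc1 : HasFDerivAt (fun x : ZMod n → ℝ => deriv (F (p+1)) (x (p+1)))
      (deriv (deriv (F (p+1))) ((0:ZMod n → ℝ) (p+1)) • pj (p+1)) 0 :=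
    by
      have h := ((hder (p+1)) ((0:ZMod n → ℝ) (p+1))).hasDerivAt.comp_hasFDerivAt
        (0 : ZMod n → ℝ) ((pj (n := n) (p+1)).hasFDerivAt)
      exact h
  have hc2 : HasFDerivAt (fun x : ZMod n → ℝ => deriv (F p) (x p))
      (deriv (deriv (F p)) ((0:ZMod n → ℝ) p) • pj p) 0 :=
    by
      have h := ((hder p) ((0:ZMod n → ℝ) p)).hasDerivAt.comp_hasFDerivAt
        (0 : ZMod n → ℝ) ((pj (n := n) p).hasFDerivAt)
      exact h
  have hm := (hc1.smul (hasFDerivAt_const (pj (n := n) (p+1)) (0 : ZMod n → ℝ))).sub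
    (hc2.smul (hasFDerivAt_const (pj (n := n) p) (0 : ZMod n → ℝ)))
  -- derivative of B
  have hB : HasFDerivAt (fun y : ZMod n → ℝ => F (p+1) (y (p+1)) - F p (y p)) (mC F p 0) 0 := by
    have h1 : HasFDerivAt (fun y : ZMod n → ℝ => F (p+1) (y (p+1)))
        (deriv (F (p+1)) ((0:ZMod n → ℝ) (p+1)) • pj (p+1)) 0 :=
      ((hdiff (p+1)) ((0:ZMod n → ℝ) (p+1))).hasDerivAt.comp_hasFDerivAt 0
        ((pj (n := n) (p+1)).hasFDerivAt)
    have h2 : HasFDerivAt (fun y : ZMod n → ℝ => F p (y p))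
        (deriv (F p) ((0:ZMod n → ℝ) p) • pj p) 0 :=
      ((hdiff p) ((0:ZMod n → ℝ) p)).hasDerivAt.comp_hasFDerivAt 0 ((pj (n := n) p).hasFDerivAt)
    exact h1.sub h2
  have hBm := hB.smul hm
  have hG := hAl.add hBm
  have hT := hs.smul hG
  refine hT.congr_fderiv ?_
  symm
  have hcases := mul_self_eq_one_iff.mp (he2 p)
  have habs : |L| = L := abs_of_pos hL
  have habs2 : |-(L / 2) - L / 2| = L := by
    rw [show -(L/2) - L/2 = -L by ring, abs_neg, habs]
  ext w v
  rcases hcases with h1 | h1 <;>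
  · simp only [ContinuousLinearMap.add_apply, ContinuousLinearMap.smul_apply,
      ContinuousLinearMap.smulRight_apply, ContinuousLinearMap.sub_apply,
      ContinuousLinearMap.coe_smul', Pi.smul_apply, ContinuousLinearMap.zero_apply,
      smul_eq_mul, Pi.zero_apply, Function.comp, mC, ellc, pj,
      ContinuousLinearMap.proj_apply, hF1, hF2, hstep, h1]
    simp [hF1, hF2, hstep, h1, Real.sqrt_sq_eq_abs, abs_neg, habs, habs2, hFv]
    field_simp
    ring

end helpers

/-- The origin is a critical point of the length functional `𝓛` of a closed
polygon with `2r` vertices alternating between the graphs of `f₊` and `f₋`, and its Hessian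
there has matrix `(-1/L) • A(a)` with `a = -2(1 + L f₊''(0))`. -/
theorem stmt1 (L : ℝ) (hL : 0 < L) (r : ℕ) (hr : 1 ≤ r) [NeZero (2 * r)]
    (fplus fminus : ℝ → ℝ)
    (hfp : ContDiff ℝ 2 fplus) (hfm : ContDiff ℝ 2 fminus)
    (hp0 : fplus 0 = L / 2) (hm0 : fminus 0 = -L / 2)
    (hp1 : deriv fplus 0 = 0) (hm1 : deriv fminus 0 = 0)
    (hcurv : deriv (deriv fminus) 0 = -(deriv (deriv fplus) 0))
    (F : ZMod (2 * r) → ℝ → ℝ)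
    (hF : ∀ p : ZMod (2 * r), F p = if Even p.val then fplus else fminus)
    (𝓛 : (ZMod (2 * r) → ℝ) → ℝ)
    (h𝓛 : ∀ x : ZMod (2 * r) → ℝ, 𝓛 x = ∑ p : ZMod (2 * r),
      Real.sqrt ((x (p + 1) - x p) ^ 2 + (F (p + 1) (x (p + 1)) - F p (x p)) ^ 2))
    (a : ℝ) (ha : a = -2 * (1 + L * deriv (deriv fplus) 0)) :
    fderiv ℝ 𝓛 0 = 0 ∧
    ∀ p q : ZMod (2 * r),
      iteratedFDeriv ℝ 2 𝓛 0 ![Pi.single p 1, Pi.single q 1] =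
        ((-1 / L) • Amat (2 * r) a) p q := by
  have h𝓛' : 𝓛 = fun x => ∑ p : ZMod (2 * r),
      Real.sqrt ((x (p + 1) - x p) ^ 2 + (F (p + 1) (x (p + 1)) - F p (x p)) ^ 2) :=
    funext h𝓛
  subst h𝓛'
  haveI : Fact (1 < 2 * r) := ⟨by omega⟩
  set k := deriv (deriv fplus) 0 with hk
  set e : ZMod (2 * r) → ℝ := fun p => if Even p.val then 1 else -1 with he
  -- parity facts
  have hmod : ∀ m : ℕ, Even (m % (2 * r)) ↔ Even m := by
    intro m
    conv_rhs => rw [← Nat.mod_add_div m (2 * r)]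
    rw [Nat.even_add]
    simp [Nat.even_mul]
  have hparity : ∀ p : ZMod (2 * r), Even ((p + 1).val) ↔ ¬ Even p.val := by
    intro p
    rw [ZMod.val_add, ZMod.val_one, hmod, Nat.even_add_one]
  have hstep : ∀ p : ZMod (2 * r), e (p + 1) = - e p := by
    intro p
    by_cases h : Even p.val
    · simp [he, h, (hparity p).not.mpr (not_not.mpr h)]
    · simp [he, h, (hparity p).mpr h]
  have he2 : ∀ p : ZMod (2 * r), e p * e p = 1 := by
    intro p; by_cases h : Even p.val <;> simp [he, h]
  -- function facts
  have hC2 : ∀ p : ZMod (2 * r), ContDiff ℝ 2 (F p) := by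
    intro p; rw [hF]; split <;> assumption
  have hFv : ∀ p : ZMod (2 * r), F p 0 = e p * (L / 2) := by
    intro p; rw [hF]
    by_cases h : Even p.val
    · simp [he, h, hp0]
    · simp [he, h, hm0]; ring
  have hF1 : ∀ p : ZMod (2 * r), deriv (F p) 0 = 0 := by
    intro p; rw [hF]; split <;> assumption
  have hF2 : ∀ p : ZMod (2 * r), deriv (deriv (F p)) 0 = e p * k := by
    intro p; rw [hF]
    by_cases h : Even p.val
    · simp [he, h, hk]
    · simp [he, h, hcurv]
  have hdiff : ∀ q : ZMod (2 * r), Differentiable ℝ (F q) := fun q =>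
    (hC2 q).differentiable (by norm_num)
  -- positivity of Q near 0
  have hQc : ∀ p : ZMod (2 * r), Continuous (fun x : ZMod (2 * r) → ℝ =>
      (x (p + 1) - x p) ^ 2 + (F (p + 1) (x (p + 1)) - F p (x p)) ^ 2) := by
    intro p
    have c1 : Continuous fun x : ZMod (2 * r) → ℝ => F (p + 1) (x (p + 1)) :=
      ((hC2 (p + 1)).continuous).comp (continuous_apply (p + 1))
    have c2 : Continuous fun x : ZMod (2 * r) → ℝ => F p (x p) :=
      ((hC2 p).continuous).comp (continuous_apply p)
    exact (((continuous_apply (p + 1)).sub (continuous_apply p)).pow 2).add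
      ((c1.sub c2).pow 2)
  have hB0 : ∀ p : ZMod (2 * r),
      F (p + 1) ((0 : ZMod (2 * r) → ℝ) (p + 1)) - F p ((0 : ZMod (2 * r) → ℝ) p)
        = -(e p) * L := by
    intro p; simp only [Pi.zero_apply, hFv, hstep]; ring
  have hQ0 : ∀ p : ZMod (2 * r),
      0 < ((0 : ZMod (2 * r) → ℝ) (p + 1) - (0 : ZMod (2 * r) → ℝ) p) ^ 2
        + (F (p + 1) ((0 : ZMod (2 * r) → ℝ) (p + 1)) - F p ((0 : ZMod (2 * r) → ℝ) p)) ^ 2 := by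
    intro p
    rw [hB0 p]
    have h1 := he2 p
    have : ((0 : ZMod (2 * r) → ℝ) (p + 1) - (0 : ZMod (2 * r) → ℝ) p) = 0 := by simp
    rw [this]
    have h2 : (-(e p) * L) ^ 2 = L ^ 2 := by
      have := he2 p; nlinarith
    rw [h2]
    positivity
  have hev : ∀ᶠ x in nhds (0 : ZMod (2 * r) → ℝ), ∀ p : ZMod (2 * r),
      0 < (x (p + 1) - x p) ^ 2 + (F (p + 1) (x (p + 1)) - F p (x p)) ^ 2 := by
    rw [Filter.eventually_all]
    intro p
    exact (hQc p).continuousAt.eventually_mem (isOpen_Ioi.mem_nhds (hQ0 p))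
  have hDx : ∀ᶠ x in nhds (0 : ZMod (2 * r) → ℝ),
      HasFDerivAt (fun y : ZMod (2 * r) → ℝ => ∑ p : ZMod (2 * r),
        Real.sqrt ((y (p + 1) - y p) ^ 2 + (F (p + 1) (y (p + 1)) - F p (y p)) ^ 2))
        (Dmap F x) x :=
    hev.mono fun x hx => hasFDerivAt_Lsum F hdiff x hx
  have hD0 : Dmap F (0 : ZMod (2 * r) → ℝ) = 0 := by
    unfold Dmap
    apply Finset.sum_eq_zero
    intro p _
    have hm : mC F p (0 : ZMod (2 * r) → ℝ) = 0 := by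
      simp [mC, hF1]
    simp [hm]
  constructor
  · rw [hDx.self_of_nhds.fderiv, hD0]
  · intro p q
    have hfd : fderiv ℝ (fun y : ZMod (2 * r) → ℝ => ∑ p : ZMod (2 * r),
        Real.sqrt ((y (p + 1) - y p) ^ 2 + (F (p + 1) (y (p + 1)) - F p (y p)) ^ 2))
        =ᶠ[nhds (0 : ZMod (2 * r) → ℝ)] Dmap F :=
      hDx.mono fun x hx => hx.fderiv
    have hΦ := hasFDerivAt_Dmap F L k hL e he2 hstep hC2 hFv hF1 hF2
    have hsnd : fderiv ℝ (fderiv ℝ (fun y : ZMod (2 * r) → ℝ => ∑ p : ZMod (2 * r),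
        Real.sqrt ((y (p + 1) - y p) ^ 2 + (F (p + 1) (y (p + 1)) - F p (y p)) ^ 2))) 0
        = ∑ j : ZMod (2 * r), ((1/L) • (ellc j).smulRight (ellc j)
          + k • ((pj (j+1)).smulRight (pj (j+1)))
          + k • ((pj j).smulRight (pj j))) := by
      rw [hfd.fderiv_eq]
      exact hΦ.fderiv
    rw [iteratedFDeriv_two_apply, hsnd]
    simp only [Matrix.cons_val_zero, Matrix.cons_val_one, Matrix.head_cons]
    -- evaluate both sides
    simp only [ContinuousLinearMap.sum_apply, ContinuousLinearMap.add_apply,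
      ContinuousLinearMap.smul_apply, ContinuousLinearMap.smulRight_apply,
      ContinuousLinearMap.sub_apply, ellc, pj, ContinuousLinearMap.proj_apply,
      smul_eq_mul]
    have hone : ∀ (c j : ZMod (2 * r)), (Pi.single c 1 : ZMod (2*r) → ℝ) j = if j = c then (1:ℝ) else 0 := by
      intro c j; simp [Pi.single_apply]
    have hshift : ∀ (c j : ZMod (2 * r)),
        (Pi.single c 1 : ZMod (2*r) → ℝ) (j + 1) = if j = c - 1 then (1:ℝ) else 0 := by
      intro c j
      by_cases h : j = c - 1
      · subst h; simp [Pi.single_apply, sub_add_cancel]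
      · have h' : j + 1 ≠ c := fun hc => h (by rw [← hc]; ring)
        simp [Pi.single_apply, h', h]
    have key : ∀ c d : ZMod (2 * r),
        ∑ j : ZMod (2 * r), (if j = c then (1:ℝ) else 0) * (if j = d then 1 else 0)
          = if c = d then 1 else 0 := by
      intro c d
      rw [Finset.sum_eq_single c]
      · simp
      · intro b _ hb; simp [hb]
      · intro h; simp at h
    have step1 : ∑ j : ZMod (2 * r),
        (1 / L * (((Pi.single p 1 : ZMod (2*r) → ℝ) (j + 1) - (Pi.single p 1 : ZMod (2*r) → ℝ) j) *
            ((Pi.single q 1 : ZMod (2*r) → ℝ) (j + 1) - (Pi.single q 1 : ZMod (2*r) → ℝ) j)) +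
          k * ((Pi.single p 1 : ZMod (2*r) → ℝ) (j + 1) * (Pi.single q 1 : ZMod (2*r) → ℝ) (j + 1)) +
          k * ((Pi.single p 1 : ZMod (2*r) → ℝ) j * (Pi.single q 1 : ZMod (2*r) → ℝ) j)) =
        ∑ j : ZMod (2 * r),
        ((1/L) * ((if j = p - 1 then (1:ℝ) else 0) * (if j = q - 1 then 1 else 0))
         - (1/L) * ((if j = p - 1 then (1:ℝ) else 0) * (if j = q then 1 else 0))
         - (1/L) * ((if j = p then (1:ℝ) else 0) * (if j = q - 1 then 1 else 0))
         + (1/L) * ((if j = p then (1:ℝ) else 0) * (if j = q then 1 else 0))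
         + k * ((if j = p - 1 then (1:ℝ) else 0) * (if j = q - 1 then 1 else 0))
         + k * ((if j = p then (1:ℝ) else 0) * (if j = q then 1 else 0))) := by
      refine Finset.sum_congr rfl fun j _ => ?_
      rw [hshift p j, hshift q j, hone p j, hone q j]
      ring
    rw [step1]
    simp only [Finset.sum_add_distrib, Finset.sum_sub_distrib, ← Finset.mul_sum, key]
    have e1 : (p - 1 = q - 1) = (p = q) := by
      apply propext; constructor <;> intro h
      · have := congrArg (fun z => z + 1) h; simpa using this
      · rw [h]
    have e2 : (p - 1 = q) = (p = q + 1) := by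
      apply propext; exact sub_eq_iff_eq_add
    have e3 : (p = q - 1) = (q = p + 1) := by
      apply propext; constructor <;> intro h
      · rw [h]; ring
      · rw [h]; ring
    simp only [e1, e2, e3]
    simp only [Amat, shiftMat, Matrix.smul_apply, Matrix.add_apply, Matrix.one_apply,
      Matrix.transpose_apply, smul_eq_mul]
    subst ha
    generalize (if p = q then (1:ℝ) else 0) = X
    generalize (if p = q + 1 then (1:ℝ) else 0) = Y
    generalize (if q = p + 1 then (1:ℝ) else 0) = Z
    field_simp
    ring
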